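/- Let β be an algebraic number of degree n ≥ 5 over ℚ such that β^k ∉ ℚ for every nonzero integer k. Let β_1, …, β_n be the conjugates of β and suppose that 𝔄_n ⊆ Gal(ℚ(β_1,…,β_n)/ℚ), i.e., the image of the permutation representation of the Galois group of the splitting field on the roots contains the alternating group 𝔄_n. Then for all integers v_1, …, v_n that are not all equal, the product β_1^{v_1} ⋯ β_n^{v_n} is not a root of unity. -/

import Mathlib

open Polynomial

/-- The image of the permutation representation of the Galois group of the splitting
field on the roots `B 0, …, B (n-1)`. -/
def galoisImage (n : ℕ) (B : Fin n → ℂ) : Set (Equiv.Perm (Fin n)) :=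
  {τ | ∃ σ : ℂ ≃ₐ[ℚ] ℂ, ∀ i, σ (B i) = B (τ i)}

/-- The alternating group on at least 5 points is 3-transitive. -/
lemma exists_alt_map3 {n : ℕ} (hn : 5 ≤ n) (i j k p q r : Fin n)
    (hij : i ≠ j) (hik : i ≠ k) (hjk : j ≠ k)
    (hpq : p ≠ q) (hpr : p ≠ r) (hqr : q ≠ r) :
    ∃ σ : Equiv.Perm (Fin n), σ ∈ alternatingGroup (Fin n) ∧ σ i = p ∧ σ j = q ∧ σ k = r := by
  classical
  set σ0 : Equiv.Perm (Fin n) := Equiv.swap i p with hσ0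
  have h0i : σ0 i = p := Equiv.swap_apply_left i p
  have hj1p : σ0 j ≠ p := by
    rw [← h0i]; exact fun h => hij (σ0.injective h).symm
  set σ1 : Equiv.Perm (Fin n) := Equiv.swap (σ0 j) q * σ0 with hσ1
  have h1i : σ1 i = p := by
    show Equiv.swap (σ0 j) q (σ0 i) = p
    rw [h0i]
    exact Equiv.swap_apply_of_ne_of_ne (Ne.symm hj1p) hpq
  have h1j : σ1 j = q := by
    show Equiv.swap (σ0 j) q (σ0 j) = q
    exact Equiv.swap_apply_left _ _
  have hk2p : σ1 k ≠ p := by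
    rw [← h1i]; exact fun h => hik (σ1.injective h).symm
  have hk2q : σ1 k ≠ q := by
    rw [← h1j]; exact fun h => hjk (σ1.injective h).symm
  set σ2 : Equiv.Perm (Fin n) := Equiv.swap (σ1 k) r * σ1 with hσ2
  have h2i : σ2 i = p := by
    show Equiv.swap (σ1 k) r (σ1 i) = p
    rw [h1i]
    exact Equiv.swap_apply_of_ne_of_ne (Ne.symm hk2p) hpr
  have h2j : σ2 j = q := by
    show Equiv.swap (σ1 k) r (σ1 j) = q
    rw [h1j]
    exact Equiv.swap_apply_of_ne_of_ne (Ne.symm hk2q) hqr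
  have h2k : σ2 k = r := by
    show Equiv.swap (σ1 k) r (σ1 k) = r
    exact Equiv.swap_apply_left _ _
  rcases Int.units_eq_one_or (Equiv.Perm.sign σ2) with hsgn | hsgn
  · exact ⟨σ2, Equiv.Perm.mem_alternatingGroup.mpr hsgn, h2i, h2j, h2k⟩
  · have hcard3 : ({p, q, r} : Finset (Fin n)).card = 3 := by
      rw [Finset.card_insert_of_notMem (by simp [hpq, hpr]),
        Finset.card_insert_of_notMem (by simp [hqr]), Finset.card_singleton]
    have hcard : 1 < (({p, q, r} : Finset (Fin n))ᶜ).card := by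
      rw [Finset.card_compl, hcard3, Fintype.card_fin]
      omega
    obtain ⟨s, hs, t, ht, hst⟩ := Finset.one_lt_card.mp hcard
    simp only [Finset.mem_compl, Finset.mem_insert, Finset.mem_singleton, not_or] at hs ht
    refine ⟨Equiv.swap s t * σ2, ?_, ?_, ?_, ?_⟩
    · rw [Equiv.Perm.mem_alternatingGroup, Equiv.Perm.sign_mul, Equiv.Perm.sign_swap hst, hsgn]
      decide
    · show Equiv.swap s t (σ2 i) = p
      rw [h2i]
      exact Equiv.swap_apply_of_ne_of_ne (Ne.symm hs.1) (Ne.symm ht.1)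
    · show Equiv.swap s t (σ2 j) = q
      rw [h2j]
      exact Equiv.swap_apply_of_ne_of_ne (Ne.symm hs.2.1) (Ne.symm ht.2.1)
    · show Equiv.swap s t (σ2 k) = r
      rw [h2k]
      exact Equiv.swap_apply_of_ne_of_ne (Ne.symm hs.2.2) (Ne.symm ht.2.2)

/-- Let `β` be an algebraic number of degree `n ≥ 5` such that no nonzero
integer power of `β` is rational, with conjugates `B 0, …, B (n-1)`, and suppose the
Galois group of the splitting field contains `𝔄ₙ`.  Then for all integers `vᵢ`, not all
equal, the product `∏ Bᵢ^{vᵢ}` is not a root of unity. -/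
theorem stmt_6 (n : ℕ) (hn : 5 ≤ n) (b : ℂ) (B : Fin n → ℂ)
    (hb : IsIntegral ℚ b)
    (hdeg : (minpoly ℚ b).natDegree = n)
    (hroots : (minpoly ℚ b).aroots ℂ = Multiset.map B Finset.univ.val)
    (hpow : ∀ k : ℤ, k ≠ 0 → ∀ q : ℚ, b ^ k ≠ (q : ℂ))
    (hgal : (alternatingGroup (Fin n) : Set (Equiv.Perm (Fin n))) ⊆ galoisImage n B)
    (v : Fin n → ℤ) (hv : ∃ i j, v i ≠ v j) :
    ¬ ∃ m : ℕ, 0 < m ∧ (∏ i, B i ^ v i) ^ m = 1 := by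
  classical
  rintro ⟨m, hm, hζ⟩
  set P := minpoly ℚ b with hPdef
  have hb0 : b ≠ 0 := by
    intro h
    exact hpow 1 one_ne_zero 0 (by simp [h])
  have hPmonic : P.Monic := minpoly.monic hb
  have hmapne : P.map (algebraMap ℚ ℂ) ≠ 0 := (hPmonic.map _).ne_zero
  have hroots' : (P.map (algebraMap ℚ ℂ)).roots = Multiset.map B Finset.univ.val := hroots
  have hBroot : ∀ x, (P.map (algebraMap ℚ ℂ)).IsRoot (B x) := by
    intro x
    have hxmem : B x ∈ (P.map (algebraMap ℚ ℂ)).roots := by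
      rw [hroots']
      exact Multiset.mem_map_of_mem _ (Finset.mem_univ_val x)
    exact (Polynomial.mem_roots hmapne).mp hxmem
  have hB0 : ∀ x, B x ≠ 0 := by
    intro x hx
    have h0 : P.coeff 0 ≠ 0 := minpoly.coeff_zero_ne_zero hb hb0
    have hr := hBroot x
    rw [hx, Polynomial.IsRoot, ← Polynomial.coeff_zero_eq_eval_zero, Polynomial.coeff_map] at hr
    exact h0 ((map_eq_zero_iff _ (algebraMap ℚ ℂ).injective).mp hr)
  have hP : P.map (algebraMap ℚ ℂ) = ∏ x, (X - C (B x)) := by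
    have hsplit : Splits (P.map (algebraMap ℚ ℂ)) :=
      IsAlgClosed.splits _
    have heq := hsplit.eq_prod_roots_of_monic (hPmonic.map _)
    rw [heq, hroots', Multiset.map_map, Finset.prod_eq_multiset_prod]
    rfl
  have hprodB : ∏ x, B x = (-1 : ℂ) ^ n * algebraMap ℚ ℂ (P.coeff 0) := by
    have h0 := congrArg (Polynomial.eval 0) hP
    rw [← Polynomial.coeff_zero_eq_eval_zero, Polynomial.coeff_map] at h0
    simp only [Polynomial.eval_prod, Polynomial.eval_sub, Polynomial.eval_X, Polynomial.eval_C,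
      zero_sub] at h0
    have hneg : ∏ x : Fin n, -B x = (-1 : ℂ) ^ n * ∏ x, B x := by
      calc ∏ x : Fin n, -B x = ∏ x : Fin n, (-1 : ℂ) * B x := by simp
        _ = (∏ _x : Fin n, (-1 : ℂ)) * ∏ x, B x := Finset.prod_mul_distrib
        _ = (-1 : ℂ) ^ n * ∏ x, B x := by
            rw [Finset.prod_const, Finset.card_univ, Fintype.card_fin]
    rw [hneg] at h0
    have hsq : ((-1 : ℂ) ^ n) * ((-1 : ℂ) ^ n) = 1 := by
      rw [← pow_add, show n + n = 2 * n by ring, pow_mul]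
      norm_num
    calc ∏ x, B x = (((-1 : ℂ) ^ n) * ((-1 : ℂ) ^ n)) * ∏ x, B x := by rw [hsq, one_mul]
      _ = (-1 : ℂ) ^ n * ((-1 : ℂ) ^ n * ∏ x, B x) := by ring
      _ = (-1 : ℂ) ^ n * algebraMap ℚ ℂ (P.coeff 0) := by rw [← h0]
  obtain ⟨i0, hi0⟩ : ∃ x, B x = b := by
    have hev : Polynomial.eval b (P.map (algebraMap ℚ ℂ)) = 0 := by
      rw [Polynomial.eval_map, ← Polynomial.aeval_def]
      exact minpoly.aeval ℚ b
    rw [hP, Polynomial.eval_prod] at hev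
    obtain ⟨x, _, hx⟩ := Finset.prod_eq_zero_iff.mp hev
    refine ⟨x, ?_⟩
    simp only [Polynomial.eval_sub, Polynomial.eval_X, Polynomial.eval_C, sub_eq_zero] at hx
    exact hx.symm
  -- the Galois relation
  have hrel : ∀ σ ∈ alternatingGroup (Fin n), (∏ x, B (σ x) ^ v x) ^ m = 1 := by
    intro σ hσ
    obtain ⟨φ, hφ⟩ := hgal hσ
    have hmapζ : φ (∏ x, B x ^ v x) = ∏ x, B (σ x) ^ v x := by
      rw [map_prod]
      exact Finset.prod_congr rfl fun x _ => by rw [map_zpow₀, hφ]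
    calc (∏ x, B (σ x) ^ v x) ^ m = φ ((∏ x, B x ^ v x) ^ m) := by rw [map_pow, hmapζ]
      _ = 1 := by rw [hζ, map_one]
  -- choose indices with distinct values
  obtain ⟨ia, ic, hvac⟩ := hv
  have hac : ia ≠ ic := fun h => hvac (by rw [h])
  obtain ⟨ib, hiba, hibc⟩ : ∃ x : Fin n, x ≠ ia ∧ x ≠ ic := by
    have hcard : 0 < (({ia, ic} : Finset (Fin n))ᶜ).card := by
      have h2 : ({ia, ic} : Finset (Fin n)).card ≤ 2 :=
        (Finset.card_insert_le _ _).trans (by simp)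
      rw [Finset.card_compl, Fintype.card_fin]
      omega
    obtain ⟨x, hx⟩ := Finset.card_pos.mp hcard
    simp only [Finset.mem_compl, Finset.mem_insert, Finset.mem_singleton, not_or] at hx
    exact ⟨x, hx.1, hx.2⟩
  -- the 3-cycle γ : ia ↦ ic ↦ ib ↦ ia
  set γ : Equiv.Perm (Fin n) := Equiv.swap ia ib * Equiv.swap ia ic with hγdef
  have hγa : γ ia = ic := by
    show Equiv.swap ia ib (Equiv.swap ia ic ia) = ic
    rw [Equiv.swap_apply_left]
    exact Equiv.swap_apply_of_ne_of_ne (Ne.symm hac) (fun h => hibc h.symm)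
  have hγc : γ ic = ib := by
    show Equiv.swap ia ib (Equiv.swap ia ic ic) = ib
    rw [Equiv.swap_apply_right, Equiv.swap_apply_left]
  have hγb : γ ib = ia := by
    show Equiv.swap ia ib (Equiv.swap ia ic ib) = ia
    rw [Equiv.swap_apply_of_ne_of_ne hiba hibc, Equiv.swap_apply_right]
  have hγmem : γ ∈ alternatingGroup (Fin n) := by
    rw [Equiv.Perm.mem_alternatingGroup, Equiv.Perm.sign_mul,
      Equiv.Perm.sign_swap (Ne.symm hiba), Equiv.Perm.sign_swap hac]
    decide
  have hγia : γ⁻¹ ia = ib := by rw [← hγb, Equiv.Perm.coe_inv, Equiv.symm_apply_apply]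
  have hγib : γ⁻¹ ib = ic := by rw [← hγc, Equiv.Perm.coe_inv, Equiv.symm_apply_apply]
  have hγic : γ⁻¹ ic = ia := by rw [← hγa, Equiv.Perm.coe_inv, Equiv.symm_apply_apply]
  have hγfix : ∀ y, y ≠ ia → y ≠ ib → y ≠ ic → γ⁻¹ y = y := by
    intro y h1 h2 h3
    have : γ y = y := by
      show Equiv.swap ia ib (Equiv.swap ia ic y) = y
      rw [Equiv.swap_apply_of_ne_of_ne (Ne.symm (fun h => h1 h.symm)) (Ne.symm (fun h => h3 h.symm)),
        Equiv.swap_apply_of_ne_of_ne (Ne.symm (fun h => h1 h.symm)) (Ne.symm (fun h => h2 h.symm))]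
    calc γ⁻¹ y = γ⁻¹ (γ y) := by rw [this]
      _ = y := by rw [Equiv.Perm.coe_inv, Equiv.symm_apply_apply]
  -- the three-term relation
  have hA : ∀ σ ∈ alternatingGroup (Fin n),
      (B (σ ia) ^ (v ib - v ia) * (B (σ ib) ^ (v ic - v ib) * B (σ ic) ^ (v ia - v ic))) ^ m
        = 1 := by
    intro σ hσ
    have h1 := hrel σ hσ
    have h2 := hrel (σ * γ) (mul_mem hσ hγmem)
    have hre : (∏ x, B ((σ * γ) x) ^ v x) = ∏ y, B (σ y) ^ v (γ⁻¹ y) := by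
      rw [← Equiv.prod_comp γ (fun y => B (σ y) ^ v (γ⁻¹ y))]
      exact Finset.prod_congr rfl fun x _ => by rw [Equiv.Perm.coe_inv, Equiv.symm_apply_apply]; rfl
    rw [hre] at h2
    have hsplit : ∀ y : Fin n, B (σ y) ^ v (γ⁻¹ y)
        = B (σ y) ^ (v (γ⁻¹ y) - v y) * B (σ y) ^ v y := by
      intro y
      rw [← zpow_add₀ (hB0 _), sub_add_cancel]
    rw [Finset.prod_congr rfl (fun y _ => hsplit y), Finset.prod_mul_distrib, mul_pow, h1,
      mul_one] at h2
    have hcompute : (∏ y, B (σ y) ^ (v (γ⁻¹ y) - v y))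
        = B (σ ia) ^ (v ib - v ia) * (B (σ ib) ^ (v ic - v ib) * B (σ ic) ^ (v ia - v ic)) := by
      rw [← Finset.prod_subset (Finset.subset_univ ({ia, ib, ic} : Finset (Fin n)))
        (fun y _ hy => ?_)]
      · rw [Finset.prod_insert (by
            simp only [Finset.mem_insert, Finset.mem_singleton, not_or]
            exact ⟨fun h => hiba h.symm, hac⟩),
          Finset.prod_insert (by simpa using hibc), Finset.prod_singleton, hγia, hγib, hγic]
      · simp only [Finset.mem_insert, Finset.mem_singleton, not_or] at hy
        rw [hγfix y hy.1 hy.2.1 hy.2.2, sub_self, zpow_zero]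
    rw [hcompute] at h2
    exact h2
  -- pairwise relation
  set E : ℤ := v ia - v ic with hEdef
  have hE : E ≠ 0 := sub_ne_zero.mpr hvac
  have hpair : ∀ r r' : Fin n, B r ^ (E * (m : ℤ)) = B r' ^ (E * (m : ℤ)) := by
    intro r r'
    by_cases hrr : r = r'
    · rw [hrr]
    obtain ⟨p, hp, q, hq, hpq⟩ : ∃ p ∈ (({r, r'} : Finset (Fin n))ᶜ),
        ∃ q ∈ (({r, r'} : Finset (Fin n))ᶜ), p ≠ q := by
      apply Finset.one_lt_card.mp
      have h2 : ({r, r'} : Finset (Fin n)).card ≤ 2 :=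
        (Finset.card_insert_le _ _).trans (by simp)
      rw [Finset.card_compl, Fintype.card_fin]
      omega
    simp only [Finset.mem_compl, Finset.mem_insert, Finset.mem_singleton, not_or] at hp hq
    obtain ⟨σ1, hσ1mem, h1a, h1b, h1c⟩ := exists_alt_map3 hn ia ib ic p q r
      (Ne.symm hiba) hac hibc hpq hp.1 hq.1
    obtain ⟨σ2, hσ2mem, h2a, h2b, h2c⟩ := exists_alt_map3 hn ia ib ic p q r'
      (Ne.symm hiba) hac hibc hpq hp.2 hq.2
    have H1 := hA σ1 hσ1mem
    rw [h1a, h1b, h1c] at H1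
    have H2 := hA σ2 hσ2mem
    rw [h2a, h2b, h2c] at H2
    have hcan : (B r ^ E) ^ m = (B r' ^ E) ^ m := by
      have hexp1 : (B p ^ (v ib - v ia)) ^ m * ((B q ^ (v ic - v ib)) ^ m * (B r ^ E) ^ m)
          = 1 := by rw [← mul_pow, ← mul_pow]; exact H1
      have hexp2 : (B p ^ (v ib - v ia)) ^ m * ((B q ^ (v ic - v ib)) ^ m * (B r' ^ E) ^ m)
          = 1 := by rw [← mul_pow, ← mul_pow]; exact H2
      have h12 := hexp1.trans hexp2.symm
      have hpne : (B p ^ (v ib - v ia)) ^ m ≠ 0 := pow_ne_zero _ (zpow_ne_zero _ (hB0 p))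
      have hqne : (B q ^ (v ic - v ib)) ^ m ≠ 0 := pow_ne_zero _ (zpow_ne_zero _ (hB0 q))
      exact mul_left_cancel₀ hqne (mul_left_cancel₀ hpne h12)
    calc B r ^ (E * (m : ℤ)) = (B r ^ E) ^ (m : ℤ) := by rw [zpow_mul]
      _ = (B r ^ E) ^ m := by rw [zpow_natCast]
      _ = (B r' ^ E) ^ m := hcan
      _ = (B r' ^ E) ^ (m : ℤ) := by rw [zpow_natCast]
      _ = B r' ^ (E * (m : ℤ)) := by rw [← zpow_mul]
  -- conclude
  have hprodpow : (∏ x, B x) ^ (E * (m : ℤ)) = b ^ (E * (m : ℤ) * (n : ℤ)) := by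
    rw [← Finset.prod_zpow]
    calc (∏ x, B x ^ (E * (m : ℤ))) = ∏ _x : Fin n, b ^ (E * (m : ℤ)) :=
        Finset.prod_congr rfl fun x _ => by rw [hpair x i0, hi0]
      _ = (b ^ (E * (m : ℤ))) ^ n := by
        rw [Finset.prod_const, Finset.card_univ, Fintype.card_fin]
      _ = (b ^ (E * (m : ℤ))) ^ (n : ℤ) := by rw [zpow_natCast]
      _ = b ^ (E * (m : ℤ) * (n : ℤ)) := by rw [← zpow_mul]
  set q1 : ℚ := (-1 : ℚ) ^ n * P.coeff 0 with hq1def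
  have hq1 : algebraMap ℚ ℂ q1 = ∏ x, B x := by
    rw [hq1def, map_mul, map_pow, map_neg, map_one, hprodB]
  have hfinal : b ^ (E * (m : ℤ) * (n : ℤ)) = ((q1 ^ (E * (m : ℤ)) : ℚ) : ℂ) := by
    rw [← hprodpow, ← hq1, ← map_zpow₀ (algebraMap ℚ ℂ), eq_ratCast]
  refine hpow (E * (m : ℤ) * (n : ℤ)) ?_ _ hfinal
  have hmne : (m : ℤ) ≠ 0 := Int.natCast_ne_zero.mpr hm.ne'
  have hnne : (n : ℤ) ≠ 0 := Int.natCast_ne_zero.mpr (by omega)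
  exact mul_ne_zero (mul_ne_zero hE hmne) hnne
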